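/- Let B be an n×n integer skew-symmetrizable matrix, R = diag(r_i) and S positive integer diagonal matrices such that SRB is skew-symmetric, and let B̄ = μ_k^g(B) be the generalized matrix mutation of B in direction k. Then for either sign ε ∈ {+,−}, E_k^ε · (B̄ R^{-1} S^{-1}) · (E_k^ε)^⊤ = B R^{-1} S^{-1}, where E_k^ε is the matrix with e_{il} = δ_{il} for l ≠ k, e_{kk} = −1, and e_{ik} = [ε b_{ik}]_+ r_k for i ≠ k. -/

import Mathlib

open Matrix

/-- The generalized matrix mutation `μ_k^g` in direction `k`, with parameters `r`. -/
def genMut {n : ℕ} (r : Fin n → ℤ) (k : Fin n)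
    (B : Matrix (Fin n) (Fin n) ℤ) : Matrix (Fin n) (Fin n) ℤ :=
  Matrix.of fun i j =>
    if i = k ∨ j = k then -B i j
    else B i j + r k * (B i k * max (-B k j) 0 + max (B i k) 0 * B k j)

/-- The matrix `E_k^ε` (over ℚ): identity except in column `k`, where `e_{kk} = -1`
and `e_{ik} = [ε b_{ik}]₊ · r_k` for `i ≠ k`. -/
def Emat {n : ℕ} (r : Fin n → ℤ) (B : Matrix (Fin n) (Fin n) ℤ) (k : Fin n) (ε : ℤ) :
    Matrix (Fin n) (Fin n) ℚ :=
  Matrix.of fun i l =>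
    if l ≠ k then (if i = l then 1 else 0)
    else if i = k then -1 else ((max (ε * B i k) 0 * r k : ℤ) : ℚ)

lemma sumE {n : ℕ} (r : Fin n → ℤ) (B : Matrix (Fin n) (Fin n) ℤ) (k : Fin n) (ε : ℤ)
    (f : Fin n → ℚ) (i : Fin n) :
    ∑ p, Emat r B k ε i p * f p =
      if i = k then -f k else f i + ((max (ε * B i k) 0 * r k : ℤ) : ℚ) * f k := by
  classical
  rw [← Finset.sum_erase_add _ _ (Finset.mem_univ k)]
  have h1 : ∑ p ∈ Finset.univ.erase k, Emat r B k ε i p * f p =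
      ∑ p ∈ Finset.univ.erase k, (if i = p then f p else 0) := by
    refine Finset.sum_congr rfl fun p hp => ?_
    rw [Finset.mem_erase] at hp
    simp [Emat, hp.1]
  rw [h1, Finset.sum_ite_eq]
  by_cases h : i = k <;> simp [Emat, h]

lemma auxDiv (Z Y rj sj rk sk : ℚ) (hrj : rj ≠ 0) (hsj : sj ≠ 0) (hrk : rk ≠ 0) (hsk : sk ≠ 0)
    (h : Z * (sj * rj) = Y * (sk * rk)) :
    Z * rk * (rk⁻¹ * sk⁻¹) = Y * rk * (rj⁻¹ * sj⁻¹) := by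
  field_simp
  linear_combination h

lemma maxIdent (a b : ℤ) :
    a * max (-b) 0 + max a 0 * b = max (-a) 0 * b + max b 0 * a := by
  have ha : max a 0 - max (-a) 0 = a := max_zero_sub_max_neg_zero_eq_self a
  have hb : max b 0 - max (-b) 0 = b := max_zero_sub_max_neg_zero_eq_self b
  linear_combination (-a) * hb + b * ha

/-- `E_k^ε · (B̄ R⁻¹ S⁻¹) · (E_k^ε)ᵀ = B R⁻¹ S⁻¹` where `B̄ = μ_k^g(B)`,
for either sign `ε`, with `S`, `R` positive integer diagonal and `S·R·B` skew-symmetric. -/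
theorem Emat_conj_genMut (n : ℕ) (r s : Fin n → ℤ) (hr : ∀ i, 0 < r i) (hs : ∀ i, 0 < s i)
    (B : Matrix (Fin n) (Fin n) ℤ)
    (hskew : (Matrix.diagonal s * Matrix.diagonal r * B)ᵀ =
      -(Matrix.diagonal s * Matrix.diagonal r * B))
    (k : Fin n) (ε : ℤ) (hε : ε = 1 ∨ ε = -1) :
    Emat r B k ε *
        ((genMut r k B).map (Int.cast : ℤ → ℚ) *
          (Matrix.diagonal fun i => ((r i : ℚ))⁻¹) *
          (Matrix.diagonal fun i => ((s i : ℚ))⁻¹)) *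
        (Emat r B k ε)ᵀ =
      B.map (Int.cast : ℤ → ℚ) * (Matrix.diagonal fun i => ((r i : ℚ))⁻¹) *
        (Matrix.diagonal fun i => ((s i : ℚ))⁻¹) := by
  classical
  -- entrywise skew-symmetry
  have hB : ∀ i j, (s j * r j * B j i : ℤ) = -(s i * r i * B i j) := by
    intro i j
    have h := congrFun (congrFun hskew i) j
    simp only [Matrix.diagonal_mul_diagonal, Matrix.transpose_apply, Matrix.neg_apply,
      Matrix.diagonal_mul] at h
    linarith
  have hkk : B k k = 0 := by
    have h := hB k k
    have h2 : (s k * r k) * B k k = 0 := by linarith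
    have hpos : (0:ℤ) < s k * r k := mul_pos (hs k) (hr k)
    exact (mul_eq_zero.mp h2).resolve_left hpos.ne'
  have hrQ : ∀ i, ((r i : ℚ)) ≠ 0 := fun i => Int.cast_ne_zero.2 (hr i).ne'
  have hsQ : ∀ i, ((s i : ℚ)) ≠ 0 := fun i => Int.cast_ne_zero.2 (hs i).ne'
  set M := (genMut r k B).map (Int.cast : ℤ → ℚ) *
      (Matrix.diagonal fun i => ((r i : ℚ))⁻¹) * (Matrix.diagonal fun i => ((s i : ℚ))⁻¹) with hM
  have hMent : ∀ p q, M p q = ((genMut r k B p q : ℤ) : ℚ) * (r q : ℚ)⁻¹ * (s q : ℚ)⁻¹ := by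
    intro p q
    simp [hM, Matrix.mul_diagonal, Matrix.map_apply]
  have gkk : genMut r k B k k = 0 := by simp [genMut, hkk]
  ext i j
  have hEM : ∀ q, (Emat r B k ε * M) i q =
      if i = k then -M k q else M i q + ((max (ε * B i k) 0 * r k : ℤ) : ℚ) * M k q := by
    intro q
    rw [Matrix.mul_apply]
    exact sumE r B k ε (fun p => M p q) i
  have hL : (Emat r B k ε * M * (Emat r B k ε)ᵀ) i j =
      if j = k then -(Emat r B k ε * M) i k
      else (Emat r B k ε * M) i j +
        ((max (ε * B j k) 0 * r k : ℤ) : ℚ) * (Emat r B k ε * M) i k := by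
    rw [Matrix.mul_apply]
    rw [show ∑ q, (Emat r B k ε * M) i q * (Emat r B k ε)ᵀ q j =
        ∑ q, Emat r B k ε j q * (Emat r B k ε * M) i q by
      refine Finset.sum_congr rfl fun q _ => ?_
      rw [Matrix.transpose_apply, mul_comm]]
    exact sumE r B k ε (fun q => (Emat r B k ε * M) i q) j
  have hRent : (B.map (Int.cast : ℤ → ℚ) * (Matrix.diagonal fun i => ((r i : ℚ))⁻¹) *
      (Matrix.diagonal fun i => ((s i : ℚ))⁻¹)) i j =
      ((B i j : ℤ) : ℚ) * (r j : ℚ)⁻¹ * (s j : ℚ)⁻¹ := by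
    simp [Matrix.mul_diagonal, Matrix.map_apply]
  rw [hL, hRent]
  by_cases hjk : j = k
  · rw [if_pos hjk, hEM]
    by_cases hik : i = k
    · rw [if_pos hik, hMent, hik, hjk, gkk]
      rw [hkk]
      simp
    · rw [if_neg hik, hMent, hMent, hjk, gkk,
        show genMut r k B i k = -B i k by simp [genMut]]
      push_cast
      ring
  · rw [if_neg hjk, hEM, hEM]
    by_cases hik : i = k
    · rw [if_pos hik, if_pos hik, hMent, hMent, hik, gkk,
        show genMut r k B k j = -B k j by simp [genMut]]
      push_cast
      ring
    · rw [if_neg hik, if_neg hik, hMent, hMent, hMent, hMent, gkk,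
        show genMut r k B k j = -B k j by simp [genMut],
        show genMut r k B i k = -B i k by simp [genMut],
        show genMut r k B i j =
          B i j + r k * (B i k * max (-B k j) 0 + max (B i k) 0 * B k j) by
            simp [genMut, hik, hjk]]
      -- bridge identity
      have hmj : max (ε * B j k) 0 * (s j * r j) = max (-ε * B k j) 0 * (s k * r k) := by
        have h1 : max (ε * B j k) 0 * (s j * r j) = max (ε * B j k * (s j * r j)) 0 := by
          rw [max_mul_of_nonneg _ _ (le_of_lt (mul_pos (hs j) (hr j))), zero_mul]
        have h2 : max (-ε * B k j) 0 * (s k * r k) = max (-ε * B k j * (s k * r k)) 0 := by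
          rw [max_mul_of_nonneg _ _ (le_of_lt (mul_pos (hs k) (hr k))), zero_mul]
        rw [h1, h2]
        congr 1
        have h3 := hB k j
        linear_combination ε * h3
      have hq2 : ((max (ε * B j k) 0 : ℤ) : ℚ) * (r k : ℚ) * ((r k : ℚ)⁻¹ * (s k : ℚ)⁻¹) =
          ((max (-ε * B k j) 0 : ℤ) : ℚ) * (r k : ℚ) * ((r j : ℚ)⁻¹ * (s j : ℚ)⁻¹) := by
        have hmjQ : ((max (ε * B j k) 0 : ℤ) : ℚ) * ((s j : ℚ) * (r j : ℚ)) =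
            ((max (-ε * B k j) 0 : ℤ) : ℚ) * ((s k : ℚ) * (r k : ℚ)) := by
          exact_mod_cast congrArg (fun z : ℤ => (z : ℚ)) hmj
        exact auxDiv _ _ _ _ _ _ (hrQ j) (hsQ j) (hrQ k) (hsQ k) hmjQ
      have heps : B i k * max (-B k j) 0 + max (B i k) 0 * B k j =
          max (ε * B i k) 0 * B k j + max (-ε * B k j) 0 * B i k := by
        rcases hε with h | h <;> subst h
        · simp only [one_mul, neg_one_mul]
          ring
        · simp only [neg_one_mul, neg_neg, one_mul]
          have h4 := maxIdent (B i k) (B k j)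
          linarith
      have hepsQ : ((B i k * max (-B k j) 0 + max (B i k) 0 * B k j : ℤ) : ℚ) =
          ((max (ε * B i k) 0 * B k j + max (-ε * B k j) 0 * B i k : ℤ) : ℚ) :=
        congrArg _ heps
      push_cast at hq2 hepsQ ⊢
      linear_combination (-((B i k : ℤ) : ℚ)) * hq2 +
        ((r k : ℤ) : ℚ) * (((r j : ℤ) : ℚ))⁻¹ * (((s j : ℤ) : ℚ))⁻¹ * hepsQ
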